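/- Let μ > 1, γ > 0, δ > 0 with α₀ := δ²(d+2)² ≤ γ, and αᵢ = μ^{2i} α₀ for i = 0,...,N. Let φ : (0, γ] → (0, ∞) be increasing, ρ, C > 0, and define l = max{ i ∈ {0,...,N−1} : ρ μⁱ φ(αᵢ) ≤ C }. Let α_δ ∈ (0, γ] satisfy ρ φ(α_δ) = C δ(d+2)/√α_δ. Then α_δ < α_{l+1}, and consequently 1/μˡ ≤ μ δ(d+2)/√α_δ, i.e. C/μˡ ≤ μ ρ φ(α_δ). -/
import Mathlib


/-- Key inequality of the adaptive parameter choice: with `α₀ = δ²(d+2)² ≤ γ`,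
`αᵢ = μ^{2i}α₀`, `φ` increasing and positive on `(0,γ]`,
`l = max{ i ≤ N−1 : ρ μⁱ φ(αᵢ) ≤ C }` (with `l+1 ≤ N−1` and `α_{l+1} ≤ γ`),
and `α_δ ∈ (0,γ]` satisfying `ρ φ(α_δ) = C δ(d+2)/√α_δ`, one has
`α_δ < α_{l+1}` and consequently `C/μˡ ≤ μ ρ φ(α_δ)`. -/
theorem stmt15 (d N : ℕ) (μ γ δ ρ C : ℝ) (hμ : 1 < μ) (hγ : 0 < γ) (hδ : 0 < δ)
    (hρ : 0 < ρ) (hC : 0 < C)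
    (hα₀ : δ ^ 2 * ((d : ℝ) + 2) ^ 2 ≤ γ)
    (φ : ℝ → ℝ) (hφmono : MonotoneOn φ (Set.Ioc 0 γ))
    (hφpos : ∀ x ∈ Set.Ioc 0 γ, 0 < φ x)
    (l : ℕ)
    (hmax : IsGreatest {i : ℕ | i ≤ N - 1 ∧
      ρ * μ ^ i * φ (μ ^ (2 * i) * (δ ^ 2 * ((d : ℝ) + 2) ^ 2)) ≤ C} l)
    (hlN : l + 1 ≤ N - 1)
    (hdom : μ ^ (2 * (l + 1)) * (δ ^ 2 * ((d : ℝ) + 2) ^ 2) ≤ γ)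
    (αδ : ℝ) (hαδ : αδ ∈ Set.Ioc 0 γ)
    (heq : ρ * φ αδ = C * (δ * ((d : ℝ) + 2)) / Real.sqrt αδ) :
    αδ < μ ^ (2 * (l + 1)) * (δ ^ 2 * ((d : ℝ) + 2) ^ 2) ∧
      C / μ ^ l ≤ μ * (ρ * φ αδ) := by

  have hdpos : (0:ℝ) < (d:ℝ) + 2 := by positivity
  set A : ℝ := δ * ((d:ℝ)+2) with hA
  have hApos : 0 < A := by positivity
  have hμpos : (0:ℝ) < μ := by linarith
  set B : ℝ := μ ^ (2 * (l+1)) * (δ ^ 2 * ((d : ℝ) + 2) ^ 2) with hB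
  have hBpos : 0 < B := by positivity
  have hBmem : B ∈ Set.Ioc 0 γ := ⟨hBpos, hdom⟩
  have hφBpos := hφpos B hBmem
  have hφαpos := hφpos αδ hαδ
  have hnot : ¬ (l + 1 ≤ N - 1 ∧
      ρ * μ ^ (l+1) * φ (μ ^ (2 * (l+1)) * (δ ^ 2 * ((d : ℝ) + 2) ^ 2)) ≤ C) := by
    intro h
    have := hmax.2 h
    omega
  have hstrict : C < ρ * μ ^ (l+1) * φ B := by
    by_contra h
    exact hnot ⟨hlN, le_of_not_gt h⟩
  have hsqrtB : Real.sqrt B = μ ^ (l+1) * A := by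
    rw [hB, show μ ^ (2*(l+1)) * (δ ^ 2 * ((d : ℝ) + 2) ^ 2) = (μ ^ (l+1) * A)^2 by
      rw [hA]; ring]
    exact Real.sqrt_sq (by positivity)
  have hsqrtα : 0 < Real.sqrt αδ := Real.sqrt_pos.mpr hαδ.1
  have h1 : ρ * (φ αδ * Real.sqrt αδ) = C * A := by
    have h := heq
    rw [eq_div_iff hsqrtα.ne'] at h
    rw [hA, ← mul_assoc]; exact h
  have h2 : C * A < ρ * (φ B * Real.sqrt B) := by
    rw [hsqrtB]
    calc C * A < (ρ * μ ^ (l+1) * φ B) * A := by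
          exact mul_lt_mul_of_pos_right hstrict hApos
      _ = ρ * (φ B * (μ ^ (l+1) * A)) := by ring
  have hkey : φ αδ * Real.sqrt αδ < φ B * Real.sqrt B :=
    lt_of_mul_lt_mul_left (by linarith) hρ.le
  have hlt : αδ < B := by
    by_contra h
    push_neg at h
    have hφle : φ B ≤ φ αδ := hφmono hBmem hαδ h
    have hsle : Real.sqrt B ≤ Real.sqrt αδ := Real.sqrt_le_sqrt h
    have : φ B * Real.sqrt B ≤ φ αδ * Real.sqrt αδ :=
      mul_le_mul hφle hsle (Real.sqrt_nonneg _) hφαpos.le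
    linarith
  refine ⟨hlt, ?_⟩
  have hsα : Real.sqrt αδ < μ ^ (l+1) * A := by
    rw [← hsqrtB]
    exact Real.sqrt_lt_sqrt hαδ.1.le hlt
  rw [heq, hA]
  rw [div_le_iff₀ (by positivity)]
  rw [show μ * (C * (δ * ((d:ℝ)+2)) / Real.sqrt αδ) * μ ^ l
      = (C * (μ ^ (l+1) * A)) / Real.sqrt αδ by rw [hA]; ring,
    le_div_iff₀ hsqrtα]
  exact mul_le_mul_of_nonneg_left hsα.le hC.le
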